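/- Let X be a metric space and for i = 1,2 let (fᵢ, τᵢ) be topographical map pairs with fᵢ : Yᵢ × I → X, τᵢ : Yᵢ × I → I, where Yᵢ are compact metric spaces, such that the restrictions to the end levels Eᵢ = Yᵢ × {0,1} form disjoint topographical map pairs: f₁(τ₁⁻¹(t) ∩ E₁) ∩ f₂(τ₂⁻¹(t) ∩ E₂) = ∅ for all t. Then there exists ε > 0 such that any topographical map pairs (gᵢ, μᵢ) with d(gᵢ|_{Eᵢ}, fᵢ|_{Eᵢ}) < ε and d(μᵢ|_{Eᵢ}, τᵢ|_{Eᵢ}) < ε also restrict to disjoint topographical map pairs on the end levels. -/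

import Mathlib

open Set Metric unitInterval

/-- The end levels `Y × {0,1}` of `Y × I`. -/
def endLevels (Y : Type*) : Set (Y × I) := (univ : Set Y) ×ˢ ({0, 1} : Set I)

lemma endLevels_isCompact (Y : Type*) [MetricSpace Y] [CompactSpace Y] :
    IsCompact (endLevels Y) :=
  isCompact_univ.prod (({0, 1} : Set I).toFinite.isCompact)

/-- disjointness of topographical map pairs on the end levels is stable
under sufficiently small perturbations. -/
theorem stmt_9 {X Y₁ Y₂ : Type*} [MetricSpace X]
    [MetricSpace Y₁] [CompactSpace Y₁] [MetricSpace Y₂] [CompactSpace Y₂]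
    (f₁ : Y₁ × I → X) (τ₁ : Y₁ × I → I) (f₂ : Y₂ × I → X) (τ₂ : Y₂ × I → I)
    (hf₁ : Continuous f₁) (hτ₁ : Continuous τ₁) (hf₂ : Continuous f₂) (hτ₂ : Continuous τ₂)
    (hdisj : ∀ t : I,
      f₁ '' (τ₁ ⁻¹' {t} ∩ endLevels Y₁) ∩ f₂ '' (τ₂ ⁻¹' {t} ∩ endLevels Y₂) = ∅) :
    ∃ ε > (0 : ℝ), ∀ (g₁ : Y₁ × I → X) (μ₁ : Y₁ × I → I) (g₂ : Y₂ × I → X) (μ₂ : Y₂ × I → I),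
      Continuous g₁ → Continuous μ₁ → Continuous g₂ → Continuous μ₂ →
      (∀ p ∈ endLevels Y₁, dist (g₁ p) (f₁ p) < ε) →
      (∀ p ∈ endLevels Y₁, dist (μ₁ p) (τ₁ p) < ε) →
      (∀ p ∈ endLevels Y₂, dist (g₂ p) (f₂ p) < ε) →
      (∀ p ∈ endLevels Y₂, dist (μ₂ p) (τ₂ p) < ε) →
      ∀ t : I,
        g₁ '' (μ₁ ⁻¹' {t} ∩ endLevels Y₁) ∩ g₂ '' (μ₂ ⁻¹' {t} ∩ endLevels Y₂) = ∅ := by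
  by_cases h1 : Nonempty Y₁
  case neg =>
    refine ⟨1, one_pos, fun g₁ μ₁ g₂ μ₂ _ _ _ _ _ _ _ _ t => ?_⟩
    have hE : endLevels Y₁ = ∅ := eq_empty_of_forall_notMem fun p _ => h1 ⟨p.1⟩
    simp [hE]
  case pos =>
  by_cases h2 : Nonempty Y₂
  case neg =>
    refine ⟨1, one_pos, fun g₁ μ₁ g₂ μ₂ _ _ _ _ _ _ _ _ t => ?_⟩
    have hE : endLevels Y₂ = ∅ := eq_empty_of_forall_notMem fun p _ => h2 ⟨p.1⟩
    simp [hE]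
  case pos =>
  obtain ⟨y₁⟩ := h1
  obtain ⟨y₂⟩ := h2
  set F : (Y₁ × I) × (Y₂ × I) → ℝ :=
    fun pq => dist (f₁ pq.1) (f₂ pq.2) + dist (τ₁ pq.1) (τ₂ pq.2) with hF
  have hFc : Continuous F := by fun_prop
  have hK : IsCompact (endLevels Y₁ ×ˢ endLevels Y₂) :=
    (endLevels_isCompact Y₁).prod (endLevels_isCompact Y₂)
  have hne : (endLevels Y₁ ×ˢ endLevels Y₂).Nonempty :=
    ⟨((y₁, 0), (y₂, 0)), ⟨⟨mem_univ _, Or.inl rfl⟩, ⟨mem_univ _, Or.inl rfl⟩⟩⟩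
  obtain ⟨pq₀, hpq₀, hmin⟩ := hK.exists_isMinOn hne hFc.continuousOn
  have hc : 0 < F pq₀ := by
    rcases lt_or_eq_of_le (by positivity : (0:ℝ) ≤ F pq₀) with h | h
    · exact h
    exfalso
    simp only [hF] at h
    have hd1 : dist (f₁ pq₀.1) (f₂ pq₀.2) = 0 ∧ dist (τ₁ pq₀.1) (τ₂ pq₀.2) = 0 := by
      constructor <;> nlinarith [dist_nonneg (x := f₁ pq₀.1) (y := f₂ pq₀.2),
        dist_nonneg (x := τ₁ pq₀.1) (y := τ₂ pq₀.2)]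
    have hfe : f₁ pq₀.1 = f₂ pq₀.2 := dist_eq_zero.mp hd1.1
    have hτe : τ₁ pq₀.1 = τ₂ pq₀.2 := dist_eq_zero.mp hd1.2
    have := hdisj (τ₁ pq₀.1)
    have : f₁ pq₀.1 ∈ f₁ '' (τ₁ ⁻¹' {τ₁ pq₀.1} ∩ endLevels Y₁) ∩
        f₂ '' (τ₂ ⁻¹' {τ₁ pq₀.1} ∩ endLevels Y₂) :=
      ⟨⟨pq₀.1, ⟨rfl, hpq₀.1⟩, rfl⟩, ⟨pq₀.2, ⟨hτe.symm, hpq₀.2⟩, hfe.symm⟩⟩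
    rw [hdisj (τ₁ pq₀.1)] at this
    exact this
  refine ⟨F pq₀ / 4, by positivity,
    fun g₁ μ₁ g₂ μ₂ _ _ _ _ hg₁ hμ₁ hg₂ hμ₂ t => ?_⟩
  apply eq_empty_of_forall_notMem
  rintro x ⟨⟨p, ⟨hpt, hpE⟩, hpx⟩, ⟨q, ⟨hqt, hqE⟩, hqx⟩⟩
  have hpt : μ₁ p = t := hpt
  have hqt : μ₂ q = t := hqt
  have h1 : dist (f₁ p) (f₂ q) ≤ dist (f₁ p) (g₁ p) + dist (g₂ q) (f₂ q) := by
    calc dist (f₁ p) (f₂ q) ≤ dist (f₁ p) (g₁ p) + dist (g₁ p) (f₂ q) := dist_triangle _ _ _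
    _ = dist (f₁ p) (g₁ p) + dist (g₂ q) (f₂ q) := by rw [hpx, ← hqx]
  have h2 : dist (τ₁ p) (τ₂ q) ≤ dist (τ₁ p) (μ₁ p) + dist (μ₂ q) (τ₂ q) := by
    calc dist (τ₁ p) (τ₂ q) ≤ dist (τ₁ p) (μ₁ p) + dist (μ₁ p) (τ₂ q) := dist_triangle _ _ _
    _ = dist (τ₁ p) (μ₁ p) + dist (μ₂ q) (τ₂ q) := by rw [hpt, ← hqt]
  have hmin' : F pq₀ ≤ F (p, q) := isMinOn_iff.mp hmin (p, q) (mk_mem_prod hpE hqE)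
  have e1 := hg₁ p hpE
  have e2 := hμ₁ p hpE
  have e3 := hg₂ q hqE
  have e4 := hμ₂ q hqE
  rw [dist_comm] at e1 e2
  simp only [hF] at hmin'
  nlinarith
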